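/- Let R → S be a flat homomorphism of commutative Noetherian rings and J ⊆ I ideals of R with J ∩ Iⁿ = J·Iⁿ⁻¹ for all n ≥ 1. Then the extended ideals satisfy JS ∩ (IS)ⁿ = (JS)·(IS)ⁿ⁻¹ for all n ≥ 1. -/

import Mathlib

open TensorProduct LinearMap

/-- For a flat module, intersections of ideal-multiples of the whole module
are controlled by the intersection of the ideals. -/
lemma Module.Flat.inf_smul_top_le {R M : Type*} [CommRing R] [AddCommGroup M] [Module R M]
    [Module.Flat R M] (J K : Ideal R) :
    (J • ⊤ : Submodule R M) ⊓ (K • ⊤) ≤ (J ⊓ K) • ⊤ := by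
  intro x hx
  obtain ⟨hxJ, hxK⟩ := hx
  have h1 : (J ⊓ K : Ideal R) ≤ Submodule.comap (LinearMap.id) (J : Submodule R R) := fun r hr => hr.1
  have h2 : (J ⊓ K : Ideal R) ≤ Submodule.comap (LinearMap.id) (K : Submodule R R) := fun r hr => hr.2
  set f : (R ⧸ (J ⊓ K : Ideal R)) →ₗ[R] (R ⧸ J) × (R ⧸ K) :=
    (Submodule.mapQ _ _ LinearMap.id h1).prod (Submodule.mapQ _ _ LinearMap.id h2) with hf
  have hfinj : Function.Injective f := by
    rw [← LinearMap.ker_eq_bot, eq_bot_iff]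
    intro y hy
    obtain ⟨r, rfl⟩ := Submodule.Quotient.mk_surjective _ y
    simp only [LinearMap.mem_ker, hf, LinearMap.prod_apply, Function.prod, Prod.mk_eq_zero,
      Submodule.mapQ_apply, LinearMap.id_coe, id_eq] at hy
    obtain ⟨hy1, hy2⟩ := hy
    rw [Submodule.Quotient.mk_eq_zero] at hy1 hy2
    simp only [Submodule.mem_bot]
    exact (Submodule.Quotient.mk_eq_zero _).mpr (Submodule.mem_inf.mpr ⟨hy1, hy2⟩)
  set g : (R ⧸ (J ⊓ K : Ideal R)) ⊗[R] M →ₗ[R] ((R ⧸ J) ⊗[R] M) × ((R ⧸ K) ⊗[R] M) :=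
    (TensorProduct.prodLeft R R _ _ M).toLinearMap ∘ₗ f.rTensor M with hg
  have hginj : Function.Injective g :=
    (TensorProduct.prodLeft R R _ _ M).injective.comp
      (Module.Flat.rTensor_preserves_injective_linearMap f hfinj)
  set y : (R ⧸ (J ⊓ K : Ideal R)) ⊗[R] M := (1 : R ⧸ (J ⊓ K : Ideal R)) ⊗ₜ[R] x with hy
  have hgy : g y = 0 := by
    have e1 : ((1 : R ⧸ J) ⊗ₜ[R] x : (R ⧸ J) ⊗[R] M) = 0 := by
      have := (quotTensorEquivQuotSMul M J).symm.map_eq_zero_iff (x := Submodule.Quotient.mk x)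
      rw [quotTensorEquivQuotSMul_symm_mk] at this
      rw [this, Submodule.Quotient.mk_eq_zero]
      exact hxJ
    have e2 : ((1 : R ⧸ K) ⊗ₜ[R] x : (R ⧸ K) ⊗[R] M) = 0 := by
      have := (quotTensorEquivQuotSMul M K).symm.map_eq_zero_iff (x := Submodule.Quotient.mk x)
      rw [quotTensorEquivQuotSMul_symm_mk] at this
      rw [this, Submodule.Quotient.mk_eq_zero]
      exact hxK
    have hf1 : f (1 : R ⧸ (J ⊓ K : Ideal R)) = ((1 : R ⧸ J), (1 : R ⧸ K)) := by
      show f (Submodule.Quotient.mk 1) = _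
      simp only [hf, LinearMap.prod_apply, Function.prod, Submodule.mapQ_apply, LinearMap.id_coe, id_eq]
      rfl
    have : g y = ((1 : R ⧸ J) ⊗ₜ[R] x, (1 : R ⧸ K) ⊗ₜ[R] x) := by
      simp only [hg, hy, LinearMap.comp_apply, LinearMap.rTensor_tmul, hf1,
        LinearEquiv.coe_coe, TensorProduct.prodLeft_tmul]
    rw [this, e1, e2]
    rfl
  have hy0 : y = 0 := hginj (by rw [hgy]; exact (map_zero g).symm)
  have : (quotTensorEquivQuotSMul M (J ⊓ K)).symm (Submodule.Quotient.mk x) = 0 := by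
    rw [quotTensorEquivQuotSMul_symm_mk]
    exact hy0
  rw [LinearEquiv.map_eq_zero_iff, Submodule.Quotient.mk_eq_zero] at this
  exact this

/-- Flat base change commutes with finite intersections of ideals. -/
lemma Ideal.map_inf_of_flat {R S : Type*} [CommRing R] [CommRing S] [Algebra R S]
    [Module.Flat R S] (J K : Ideal R) :
    (J ⊓ K).map (algebraMap R S) = J.map (algebraMap R S) ⊓ K.map (algebraMap R S) := by
  refine le_antisymm (le_inf (Ideal.map_mono inf_le_left) (Ideal.map_mono inf_le_right)) ?_
  intro x hx
  have hxJ : x ∈ (J • ⊤ : Submodule R S) := by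
    rw [Ideal.smul_top_eq_map]; exact hx.1
  have hxK : x ∈ (K • ⊤ : Submodule R S) := by
    rw [Ideal.smul_top_eq_map]; exact hx.2
  have := Module.Flat.inf_smul_top_le (M := S) J K ⟨hxJ, hxK⟩
  rwa [Ideal.smul_top_eq_map] at this

/-- Aluffi torsion-freeness extends along flat ring homomorphisms. -/
theorem aluffi_torsion_free_flat_extension {R S : Type*} [CommRing R] [CommRing S]
    [IsNoetherianRing R] [IsNoetherianRing S] [Algebra R S] [Module.Flat R S]
    (J I : Ideal R) (hJI : J ≤ I)
    (h : ∀ n : ℕ, 1 ≤ n → J ⊓ I ^ n = J * I ^ (n - 1)) :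
    ∀ n : ℕ, 1 ≤ n →
      (J.map (algebraMap R S)) ⊓ (I.map (algebraMap R S)) ^ n =
        (J.map (algebraMap R S)) * (I.map (algebraMap R S)) ^ (n - 1) := by
  intro n hn
  have := Ideal.map_inf_of_flat (S := S) J (I ^ n)
  rw [h n hn, Ideal.map_mul, Ideal.map_pow] at this
  rw [this, Ideal.map_pow]
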